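/- Let ν be a shift-invariant probability on ℝ^ℤ and μ the mixture measure constructed from the fiber kernel (point masses at continuity points, normalized Lebesgue measure on jump intervals). Then the one-dimensional marginal of μ at coordinate 0 is Lebesgue measure on (0,1): μ{y : y(0) ≤ t} = t for all 0 < t < 1. -/

import Mathlib

open MeasureTheory Set

open Filter ProbabilityTheory in
lemma cdf_setOf_nonempty (ρ : Measure ℝ) [IsProbabilityMeasure ρ] {u : ℝ} (hu : u < 1) :
    {r : ℝ | u ≤ cdf ρ r}.Nonempty := by
  obtain ⟨r, hr⟩ := ((tendsto_cdf_atTop ρ).eventually (eventually_gt_nhds hu)).exists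
  exact ⟨r, hr.le⟩

open Filter ProbabilityTheory in
lemma cdf_setOf_bddBelow (ρ : Measure ℝ) [IsProbabilityMeasure ρ] {u : ℝ} (hu : 0 < u) :
    BddBelow {r : ℝ | u ≤ cdf ρ r} := by
  obtain ⟨r0, hr0⟩ := ((tendsto_cdf_atBot ρ).eventually (eventually_lt_nhds hu)).exists
  refine ⟨r0, fun r hr => ?_⟩
  by_contra hc
  push_neg at hc
  exact absurd (le_trans hr (monotone_cdf ρ hc.le)) (not_le.2 hr0)

open Filter ProbabilityTheory in
lemma le_cdf_sInf (ρ : Measure ℝ) [IsProbabilityMeasure ρ] {u : ℝ} (hu0 : 0 < u) (hu1 : u < 1) :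
    u ≤ cdf ρ (sInf {r : ℝ | u ≤ cdf ρ r}) := by
  rw [← (cdf ρ).iInf_Ioi_eq]
  refine le_ciInf fun ⟨r, hr⟩ => ?_
  obtain ⟨s, hsS, hs⟩ :=
    (csInf_lt_iff (cdf_setOf_bddBelow ρ hu0) (cdf_setOf_nonempty ρ hu1)).1 hr
  exact le_trans hsS (monotone_cdf ρ hs.le)

open Filter ProbabilityTheory in
lemma cdf_lt_of_lt_sInf (ρ : Measure ℝ) [IsProbabilityMeasure ρ] {u r : ℝ} (hu0 : 0 < u)
    (hr : r < sInf {r : ℝ | u ≤ cdf ρ r}) : cdf ρ r < u := by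
  by_contra hc
  push_neg at hc
  exact absurd (csInf_le (cdf_setOf_bddBelow ρ hu0) hc) (not_le.2 hr)

/-- The mixture measure built from the fiber kernel (point mass `δ_{F(s)}` at
continuity points `s`, normalized Lebesgue measure on the jump interval
`A_s = {u ∈ (0,1) | F⁻¹(u) = s}` at jump points) has uniform one-dimensional marginal
at coordinate `0`: `μ {y | y 0 ≤ t} = t` for all `0 < t < 1`. -/
theorem mixture_marginal_is_uniform
    (ν : Measure (ℤ → ℝ)) [IsProbabilityMeasure ν]
    (hinv : ν.map (fun x => fun n : ℤ => x (n + 1)) = ν)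
    (F : ℝ → ℝ) (hF : ∀ t, F t = ((ν.map (fun x => x 0)) (Set.Iic t)).toReal)
    (Finv : ℝ → ℝ) (hFinv : ∀ s, Finv s = sInf {t : ℝ | s ≤ F t})
    (m : ℝ → Measure ℝ)
    (hmjump : ∀ s : ℝ, sSup (F '' Set.Iio s) < F s →
      m s = (volume (Finv ⁻¹' {s} ∩ Set.Ioo (0:ℝ) 1))⁻¹ •
        volume.restrict (Finv ⁻¹' {s} ∩ Set.Ioo (0:ℝ) 1))
    (hmcont : ∀ s : ℝ, ¬ sSup (F '' Set.Iio s) < F s → m s = Measure.dirac (F s))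
    (κ : (ℤ → ℝ) → Measure (ℤ → ℝ))
    (hprob : ∀ ω, IsProbabilityMeasure (κ ω))
    (hmeas : ∀ s : Set (ℤ → ℝ), MeasurableSet s → Measurable (fun ω => κ ω s))
    (hmarg : ∀ ω, (κ ω).map (fun y => y 0) = m (ω 0)) :
    ∀ t ∈ Set.Ioo (0 : ℝ) 1,
      (ν.bind κ) {y : ℤ → ℝ | y 0 ≤ t} = ENNReal.ofReal t := by
  classical
  intro t ht
  obtain ⟨ht0, ht1⟩ := ht
  have hev : Measurable (fun x : ℤ → ℝ => x 0) := measurable_pi_apply 0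
  set ρ : Measure ℝ := ν.map (fun x => x 0) with hρdef
  have hρprob : IsProbabilityMeasure ρ := Measure.isProbabilityMeasure_map hev.aemeasurable
  set f : StieltjesFunction ℝ := ProbabilityTheory.cdf ρ with hfdef
  have hmono : Monotone f := ProbabilityTheory.monotone_cdf ρ
  have hFf : ∀ r, F r = f r := fun r => by
    rw [hF r, hfdef, ProbabilityTheory.cdf_eq_real, measureReal_def]
  have hf0 : ∀ r, 0 ≤ f r := ProbabilityTheory.cdf_nonneg ρ
  have hf1 : ∀ r, f r ≤ 1 := ProbabilityTheory.cdf_le_one ρ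
  have hLle : ∀ r, Function.leftLim f r ≤ f r := fun r => hmono.leftLim_le le_rfl
  have hL0 : ∀ r, 0 ≤ Function.leftLim f r := fun r =>
    le_trans (hf0 (r - 1)) (hmono.le_leftLim (by linarith))
  have hsup : ∀ s, sSup (F '' Iio s) = Function.leftLim f s := by
    intro s
    have h1 : F '' Iio s = f '' Iio s := by
      apply image_congr
      intro r _
      exact hFf r
    rw [h1,
      hmono.leftLim_eq_sSup (α := ℝ) (x := s)]
  have hsetEq : ∀ u : ℝ, {r : ℝ | u ≤ F r} = {r : ℝ | u ≤ f r} := by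
    intro u; ext r; simp only [mem_setOf_eq, hFf r]
  -- the quantile point
  set q : ℝ := Finv t with hqdef'
  have hqdef : q = sInf {r : ℝ | t ≤ f r} := by rw [hqdef', hFinv, hsetEq]
  have hfq : t ≤ f q := by rw [hqdef]; exact le_cdf_sInf ρ ht0 ht1
  have hlt : ∀ r, r < q → f r < t := fun r hr =>
    cdf_lt_of_lt_sInf ρ ht0 (by rwa [← hqdef])
  have hLq : Function.leftLim f q ≤ t := by
    rw [← hsup q]
    refine csSup_le ⟨F (q - 1), ⟨q - 1, by simp, rfl⟩⟩ ?_
    rintro y ⟨r, hr, rfl⟩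
    rw [hFf r]
    exact (hlt r hr).le
  -- membership facts for the fibers
  have hA_mem : ∀ u ∈ Ioo (0:ℝ) 1, ∀ s, Finv u = s →
      Function.leftLim f s ≤ u ∧ u ≤ f s := by
    rintro u hu s rfl
    have hSdef : Finv u = sInf {r : ℝ | u ≤ f r} := by rw [hFinv, hsetEq]
    constructor
    · rw [← hsup (Finv u)]
      refine csSup_le ⟨F (Finv u - 1), ⟨Finv u - 1, by simp, rfl⟩⟩ ?_
      rintro y ⟨r, hr, rfl⟩
      rw [hFf r]
      exact (cdf_lt_of_lt_sInf ρ hu.1 (by rwa [← hSdef])).le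
    · rw [hSdef]
      exact le_cdf_sInf ρ hu.1 hu.2
  have hA_sup : ∀ s, Ioo (Function.leftLim f s) (f s) ⊆ Finv ⁻¹' {s} ∩ Ioo 0 1 := by
    intro s u hu
    have hu0 : 0 < u := lt_of_le_of_lt (hL0 s) hu.1
    have hu1 : u < 1 := lt_of_lt_of_le hu.2 (hf1 s)
    refine ⟨?_, hu0, hu1⟩
    have hSdef : Finv u = sInf {r : ℝ | u ≤ f r} := by rw [hFinv, hsetEq]
    simp only [mem_preimage, mem_singleton_iff, hSdef]
    apply le_antisymm
    · exact csInf_le (cdf_setOf_bddBelow ρ hu0) hu.2.le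
    · refine le_csInf ⟨s, hu.2.le⟩ fun r hr => ?_
      by_contra hc
      push_neg at hc
      exact absurd (le_trans hr (hmono.le_leftLim hc)) (not_le.2 hu.1)
  have hvol : ∀ s, volume (Finv ⁻¹' {s} ∩ Ioo 0 1)
      = ENNReal.ofReal (f s - Function.leftLim f s) := by
    intro s
    apply le_antisymm
    · refine (measure_mono ?_).trans_eq (Real.volume_Icc)
      rintro u ⟨hu1, hu2⟩
      obtain ⟨h1, h2⟩ := hA_mem u hu2 s hu1
      exact ⟨h1, h2⟩
    · calc ENNReal.ofReal (f s - Function.leftLim f s)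
          = volume (Ioo (Function.leftLim f s) (f s)) := (Real.volume_Ioo).symm
        _ ≤ _ := measure_mono (hA_sup s)
  -- measure facts in terms of the cdf
  have hIic : ∀ r, ρ (Iic r) = ENNReal.ofReal (f r) :=
    fun r => (ProbabilityTheory.ofReal_cdf ρ r).symm
  have hsing : ∀ r, ρ {r} = ENNReal.ofReal (f r - Function.leftLim f r) := by
    intro r
    conv_lhs => rw [← ProbabilityTheory.measure_cdf ρ]
    exact (ProbabilityTheory.cdf ρ).measure_singleton r
  have hIoo : ∀ a b, ρ (Ioo a b) = ENNReal.ofReal (Function.leftLim f b - f a) := by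
    intro a b
    conv_lhs => rw [← ProbabilityTheory.measure_cdf ρ]
    exact (ProbabilityTheory.cdf ρ).measure_Ioo
  have hIio : ∀ r, ρ (Iio r) = ENNReal.ofReal (Function.leftLim f r) := by
    intro r
    have h1 : Iio r = Iic r \ {r} := (Iic_diff_right).symm
    rw [h1, measure_diff (singleton_subset_iff.2 self_mem_Iic)
      (measurableSet_singleton r).nullMeasurableSet (measure_ne_top ρ _), hIic, hsing,
      ← ENNReal.ofReal_sub _ (sub_nonneg.2 (hLle r))]
    congr 1
    ring
  have hmapset : ∀ s : Set ℝ, MeasurableSet s → ν ((fun ω : ℤ → ℝ => ω 0) ⁻¹' s) = ρ s :=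
    fun s hs => (Measure.map_apply hev hs).symm
  -- the integrand
  have hset : MeasurableSet {y : ℤ → ℝ | y 0 ≤ t} := measurableSet_le hev measurable_const
  set G : (ℤ → ℝ) → ENNReal := fun ω => κ ω {y | y 0 ≤ t} with hGdef
  have hGmeas : Measurable G := hmeas _ hset
  have hGeq : ∀ ω, G ω = m (ω 0) (Iic t) := by
    intro ω
    rw [hGdef, ← hmarg ω, Measure.map_apply hev measurableSet_Iic]
    rfl
  -- values of the kernel marginal
  have g1 : ∀ s, s < q → m s (Iic t) = 1 := by
    intro s hs
    by_cases hj : sSup (F '' Iio s) < F s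
    · have hjf : Function.leftLim f s < f s := by rwa [hsup s, hFf s] at hj
      rw [hmjump s hj, Measure.smul_apply, smul_eq_mul,
        Measure.restrict_apply measurableSet_Iic]
      have hsub : Finv ⁻¹' {s} ∩ Ioo 0 1 ⊆ Iic t := by
        rintro u ⟨hu1, hu2⟩
        exact le_trans (hA_mem u hu2 s hu1).2 (hlt s hs).le
      rw [inter_eq_self_of_subset_right hsub, hvol s]
      exact ENNReal.inv_mul_cancel
        (by simp only [ne_eq, ENNReal.ofReal_eq_zero, not_le]; linarith)
        ENNReal.ofReal_ne_top
    · rw [hmcont s hj, Measure.dirac_apply' _ measurableSet_Iic]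
      have hmem : F s ∈ Iic t := by rw [hFf s]; exact (hlt s hs).le
      simp [hmem]
  have g3 : ∀ s, q < s → m s (Iic t) ≠ 0 → f s ≤ t := by
    intro s hs hns
    by_cases hj : sSup (F '' Iio s) < F s
    · exfalso
      apply hns
      rw [hmjump s hj, Measure.smul_apply, smul_eq_mul,
        Measure.restrict_apply measurableSet_Iic]
      have hLs : t ≤ Function.leftLim f s := by
        calc t ≤ f q := hfq
          _ ≤ f ((q + s) / 2) := hmono (by linarith)
          _ ≤ Function.leftLim f s := hmono.le_leftLim (by linarith)
      have hsub : Iic t ∩ (Finv ⁻¹' {s} ∩ Ioo 0 1) ⊆ {t} := by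
        rintro u ⟨hu1, hu2, hu3⟩
        have h1 := (hA_mem u hu3 s hu2).1
        simp only [mem_singleton_iff]
        exact le_antisymm hu1 (le_trans hLs h1)
      have hz : volume (Iic t ∩ (Finv ⁻¹' {s} ∩ Ioo 0 1)) = 0 :=
        measure_mono_null hsub (by simp)
      rw [hz, mul_zero]
    · rw [hmcont s hj, Measure.dirac_apply' _ measurableSet_Iic] at hns
      by_contra hc
      push_neg at hc
      apply hns
      rw [indicator_of_notMem]
      rw [mem_Iic, hFf s]
      exact not_le.2 hc
  -- split the integral
  have hB1 : MeasurableSet ((fun ω : ℤ → ℝ => ω 0) ⁻¹' Iio q) := hev measurableSet_Iio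
  have hB2 : MeasurableSet ((fun ω : ℤ → ℝ => ω 0) ⁻¹' {q}) :=
    hev (measurableSet_singleton q)
  have hB3 : MeasurableSet ((fun ω : ℤ → ℝ => ω 0) ⁻¹' Ioi q) := hev measurableSet_Ioi
  rw [Measure.bind_apply hset (Measure.measurable_of_measurable_coe κ hmeas).aemeasurable]
  have hsplit : ∫⁻ ω, G ω ∂ν =
      (∫⁻ ω in (fun ω : ℤ → ℝ => ω 0) ⁻¹' Iio q, G ω ∂ν) +
      ((∫⁻ ω in (fun ω : ℤ → ℝ => ω 0) ⁻¹' {q}, G ω ∂ν) +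
       (∫⁻ ω in (fun ω : ℤ → ℝ => ω 0) ⁻¹' Ioi q, G ω ∂ν)) := by
    rw [← lintegral_add_compl G hB1]
    congr 1
    have hc : ((fun ω : ℤ → ℝ => ω 0) ⁻¹' Iio q)ᶜ =
        (fun ω : ℤ → ℝ => ω 0) ⁻¹' {q} ∪ (fun ω : ℤ → ℝ => ω 0) ⁻¹' Ioi q := by
      rw [← preimage_compl, ← preimage_union]
      congr 1
      rw [compl_Iio, singleton_union, Ioi_insert]
    rw [hc, lintegral_union hB3]
    exact Disjoint.preimage _ (by simp)
  have hp1 : (∫⁻ ω in (fun ω : ℤ → ℝ => ω 0) ⁻¹' Iio q, G ω ∂ν)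
      = ENNReal.ofReal (Function.leftLim f q) := by
    have h1 : ∀ ω ∈ (fun ω : ℤ → ℝ => ω 0) ⁻¹' Iio q, G ω = 1 := by
      intro ω hω
      rw [hGeq ω, g1 (ω 0) hω]
    rw [setLIntegral_congr_fun hB1 h1, setLIntegral_one,
      hmapset _ measurableSet_Iio, hIio q]
  have hp2 : (∫⁻ ω in (fun ω : ℤ → ℝ => ω 0) ⁻¹' {q}, G ω ∂ν)
      = m q (Iic t) * ENNReal.ofReal (f q - Function.leftLim f q) := by
    have h1 : ∀ ω ∈ (fun ω : ℤ → ℝ => ω 0) ⁻¹' {q}, G ω = m q (Iic t) := by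
      intro ω hω
      rw [hGeq ω]
      have : ω 0 = q := hω
      rw [this]
    rw [setLIntegral_congr_fun hB2 h1, setLIntegral_const,
      hmapset _ (measurableSet_singleton q), hsing q]
  have hp3 : (∫⁻ ω in (fun ω : ℤ → ℝ => ω 0) ⁻¹' Ioi q, G ω ∂ν) = 0 := by
    have hbad : {ω : ℤ → ℝ | ω 0 ∈ Ioi q ∧ G ω ≠ 0} ⊆
        (fun ω : ℤ → ℝ => ω 0) ⁻¹' {s : ℝ | q < s ∧ f s ≤ t} := by
      rintro ω ⟨h1, h2⟩
      refine ⟨h1, g3 (ω 0) h1 ?_⟩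
      rwa [← hGeq ω]
    have hnull : ν {ω : ℤ → ℝ | ω 0 ∈ Ioi q ∧ G ω ≠ 0} = 0 := by
      by_cases hC : {s : ℝ | q < s ∧ f s ≤ t}.Nonempty
      · obtain ⟨s₀, hs₀⟩ := hC
        obtain ⟨r, hrt⟩ := ((ProbabilityTheory.tendsto_cdf_atTop ρ).eventually
          (eventually_gt_nhds ht1)).exists
        have hCbdd : BddAbove {s : ℝ | q < s ∧ f s ≤ t} := by
          refine ⟨r, fun s hs => ?_⟩
          by_contra hc
          push_neg at hc
          exact absurd (le_trans (hmono hc.le) hs.2) (not_le.2 hrt)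
        set b := sSup {s : ℝ | q < s ∧ f s ≤ t} with hbdef
        have hfqt : f q = t := le_antisymm (le_trans (hmono hs₀.1.le) hs₀.2) hfq
        have hqb : q < b := lt_of_lt_of_le hs₀.1 (le_csSup hCbdd hs₀)
        have hLb : Function.leftLim f b ≤ t := by
          rw [← hsup b]
          refine csSup_le ⟨F (b - 1), ⟨b - 1, by simp, rfl⟩⟩ ?_
          rintro y ⟨r', hr', rfl⟩
          rw [hFf r']
          rcases le_or_gt r' q with h | h
          · exact le_trans (hmono h) hfqt.le
          · obtain ⟨s', hs'C, hrs'⟩ := exists_lt_of_lt_csSup ⟨s₀, hs₀⟩ hr'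
            exact le_trans (hmono hrs'.le) hs'C.2
        have hIoo0 : ρ (Ioo q b) = 0 := by
          rw [hIoo q b]
          simp only [ENNReal.ofReal_eq_zero]
          linarith
        by_cases hbC : b ∈ {s : ℝ | q < s ∧ f s ≤ t}
        · have hsb : ρ {b} = 0 := by
            rw [hsing b]
            simp only [ENNReal.ofReal_eq_zero]
            have h1 : t ≤ Function.leftLim f b := by
              calc t = f q := hfqt.symm
                _ ≤ f ((q + b) / 2) := hmono (by linarith)
                _ ≤ Function.leftLim f b := hmono.le_leftLim (by linarith)
            have h2 : f b ≤ t := hbC.2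
            linarith
          refine measure_mono_null (hbad.trans ?_)
            (measure_union_null (hmapset _ measurableSet_Ioo ▸ hIoo0)
              (hmapset _ (measurableSet_singleton b) ▸ hsb))
          intro ω hω
          rcases lt_or_eq_of_le (le_csSup hCbdd hω) with h | h
          · exact Or.inl ⟨hω.1, h⟩
          · exact Or.inr h
        · refine measure_mono_null (hbad.trans ?_)
            (hmapset _ measurableSet_Ioo ▸ hIoo0)
          intro ω hω
          have h1 : ω 0 ≤ b := le_csSup hCbdd hω
          rcases lt_or_eq_of_le h1 with h | h
          · exact ⟨hω.1, h⟩
          · exact absurd (h ▸ hω) hbC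
      · refine measure_mono_null (fun ω hω => ?_) (measure_empty (μ := ν))
        exact ((hC ⟨ω 0, hbad hω⟩).elim : ω ∈ (∅ : Set (ℤ → ℝ)))
    have hae : ∀ᵐ ω ∂(ν.restrict ((fun ω : ℤ → ℝ => ω 0) ⁻¹' Ioi q)), G ω = 0 := by
      rw [ae_restrict_iff' hB3]
      rw [MeasureTheory.ae_iff]
      refine measure_mono_null (fun ω hω => ?_) hnull
      simp only [mem_setOf_eq, Classical.not_imp] at hω
      exact hω
    calc (∫⁻ ω in (fun ω : ℤ → ℝ => ω 0) ⁻¹' Ioi q, G ω ∂ν)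
        = ∫⁻ _ in (fun ω : ℤ → ℝ => ω 0) ⁻¹' Ioi q, (0:ENNReal) ∂ν :=
          lintegral_congr_ae hae
      _ = 0 := by simp
  rw [hsplit, hp1, hp2, hp3, add_zero]
  by_cases hj : sSup (F '' Iio q) < F q
  · have hjf : Function.leftLim f q < f q := by rwa [hsup q, hFf q] at hj
    have hmq : m q (Iic t) = (ENNReal.ofReal (f q - Function.leftLim f q))⁻¹ *
        ENNReal.ofReal (t - Function.leftLim f q) := by
      rw [hmjump q hj, Measure.smul_apply, smul_eq_mul,
        Measure.restrict_apply measurableSet_Iic, hvol q]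
      congr 1
      apply le_antisymm
      · refine (measure_mono ?_).trans_eq (Real.volume_Icc)
        rintro u ⟨hu1, hu2, hu3⟩
        exact ⟨(hA_mem u hu3 q hu2).1, hu1⟩
      · calc ENNReal.ofReal (t - Function.leftLim f q)
            = volume (Ioo (Function.leftLim f q) t) := (Real.volume_Ioo).symm
          _ ≤ _ := by
              refine measure_mono fun u hu => ?_
              exact ⟨hu.2.le, hA_sup q ⟨hu.1, lt_of_lt_of_le hu.2 hfq⟩⟩
    rw [hmq, mul_right_comm, ENNReal.inv_mul_cancel
      (by simp only [ne_eq, ENNReal.ofReal_eq_zero, not_le]; linarith)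
      ENNReal.ofReal_ne_top, one_mul,
      ← ENNReal.ofReal_add (hL0 q) (by linarith)]
    congr 1
    ring
  · have hjf : f q ≤ Function.leftLim f q := by
      have := not_lt.1 hj
      rwa [hsup q, hFf q] at this
    have heq : Function.leftLim f q = f q := le_antisymm (hLle q) hjf
    have hz : ENNReal.ofReal (f q - Function.leftLim f q) = 0 := by
      simp only [ENNReal.ofReal_eq_zero]
      linarith
    rw [hz, mul_zero, add_zero]
    congr 1
    have h1 : t ≤ Function.leftLim f q := heq ▸ hfq
    linarith
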